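/- arXiv:math/0607565 — 2 statements merged into one kernel-verified Lean document; each statement's English description precedes it below -/
import Mathlib

section
/- The number of isotropic 2-dimensional subspaces of the standard symplectic space F_l^{2g} (l an odd prime, g ≥ 1) equals (l^{2g}-1)(l^{2g-2}-1)/((l^2-1)(l-1)). -/
set_option maxHeartbeats 2000000

attribute [local instance] Classical.propDecidable

/-- The standard symplectic form on `F_l^g × F_l^g`:
`ω((x,y),(x',y')) = x·y' - x'·y`. -/
def stdSymplForm (l g : ℕ) (a b : (Fin g → ZMod l) × (Fin g → ZMod l)) : ZMod l :=
  (∑ i, a.1 i * b.2 i) - (∑ i, b.1 i * a.2 i)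

/-- An isotropic 2-plane: a 2-dimensional subspace on which the standard
symplectic form vanishes identically. -/
def IsIsotropic2Plane (l g : ℕ)
    (W : Submodule (ZMod l) ((Fin g → ZMod l) × (Fin g → ZMod l))) : Prop :=
  Module.finrank (ZMod l) W = 2 ∧
    ∀ x ∈ W, ∀ y ∈ W, stdSymplForm l g x y = 0

namespace IsoPlaneAux

open Finset Submodule Module

variable (l g : ℕ) [Fact (Nat.Prime l)]

abbrev V := (Fin g → ZMod l) × (Fin g → ZMod l)

/-- `stdSymplForm` as a bilinear map. -/
noncomputable def B : V l g →ₗ[ZMod l] V l g →ₗ[ZMod l] ZMod l :=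
  LinearMap.mk₂ (ZMod l) (stdSymplForm l g)
    (by intro a a' b; simp [stdSymplForm, add_mul, mul_add, Finset.sum_add_distrib]; ring)
    (by intro c a b; simp [stdSymplForm, Finset.mul_sum, mul_sub, mul_assoc, mul_left_comm])
    (by intro a b b'; simp [stdSymplForm, add_mul, mul_add, Finset.sum_add_distrib]; ring)
    (by intro c a b; simp [stdSymplForm, Finset.mul_sum, mul_sub, mul_assoc, mul_left_comm])

lemma B_apply (a b : V l g) : B l g a b = stdSymplForm l g a b := rfl

lemma B_self (a : V l g) : B l g a a = 0 := by
  simp [B_apply, stdSymplForm, mul_comm]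

lemma B_skew (a b : V l g) : B l g b a = - B l g a b := by
  simp only [B_apply, stdSymplForm]; ring

lemma exists_B_ne_zero {v : V l g} (hv : v ≠ 0) : ∃ w, B l g v w ≠ 0 := by
  have h : v.1 ≠ 0 ∨ v.2 ≠ 0 := by
    by_contra h
    push_neg at h
    exact hv (Prod.ext h.1 h.2)
  rcases h with h1 | h2
  · obtain ⟨i, hi⟩ := Function.ne_iff.mp h1
    refine ⟨(0, Pi.single i 1), ?_⟩
    simpa [B_apply, stdSymplForm, Pi.single_apply, mul_ite, Finset.sum_ite_eq'] using hi
  · obtain ⟨i, hi⟩ := Function.ne_iff.mp h2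
    refine ⟨(Pi.single i 1, 0), ?_⟩
    simp [B_apply, stdSymplForm, Pi.single_apply, ite_mul, Finset.sum_ite_eq']
    simpa using hi

lemma finrank_V : Module.finrank (ZMod l) (V l g) = 2 * g := by
  simp [Module.finrank_prod, Module.finrank_fintype_fun_eq_card]; ring

lemma card_V : Fintype.card (V l g) = l ^ (2 * g) := by
  rw [card_eq_pow_finrank (K := ZMod l), ZMod.card, finrank_V]

lemma card_filter_mem (W : Submodule (ZMod l) (V l g)) :
    (Finset.univ.filter (· ∈ W)).card = l ^ (Module.finrank (ZMod l) W) := by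
  rw [← Fintype.card_subtype, card_eq_pow_finrank (K := ZMod l), ZMod.card]

/-- Counting `w` with `B v w = 0` and `w ∉ span {v}`, for `v ≠ 0`. -/
lemma card_perp (hg : 1 ≤ g) {v : V l g} (hv : v ≠ 0) :
    (Finset.univ.filter
        (fun w => B l g v w = 0 ∧ w ∉ Submodule.span (ZMod l) {v})).card
      = l ^ (2 * g - 1) - l := by
  have hspan : Submodule.span (ZMod l) {v} ≤ LinearMap.ker (B l g v) := by
    rw [Submodule.span_le, Set.singleton_subset_iff]
    exact LinearMap.mem_ker.mpr (B_self l g v)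
  have hrank : Module.finrank (ZMod l) (LinearMap.ker (B l g v)) = 2 * g - 1 := by
    obtain ⟨w0, hw0⟩ := exists_B_ne_zero l g hv
    have hsurj : Function.Surjective (B l g v) := by
      intro a
      exact ⟨(a * (B l g v w0)⁻¹) • w0, by
        simp [smul_eq_mul, mul_assoc, inv_mul_cancel₀ hw0]⟩
    have h1 : Module.finrank (ZMod l) (LinearMap.range (B l g v)) = 1 := by
      rw [LinearMap.range_eq_top.mpr hsurj, finrank_top, Module.finrank_self]
    have h2 := LinearMap.finrank_range_add_finrank_ker (B l g v)
    rw [h1, finrank_V] at h2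
    omega
  have hsub : (Finset.univ.filter (· ∈ Submodule.span (ZMod l) {v}))
      ⊆ (Finset.univ.filter (· ∈ LinearMap.ker (B l g v))) := by
    intro w hw
    simp only [Finset.mem_filter] at hw ⊢
    exact ⟨hw.1, hspan hw.2⟩
  have heq : (Finset.univ.filter
        (fun w => B l g v w = 0 ∧ w ∉ Submodule.span (ZMod l) {v}))
      = (Finset.univ.filter (· ∈ LinearMap.ker (B l g v)))
          \ (Finset.univ.filter (· ∈ Submodule.span (ZMod l) {v})) := by
    ext w
    simp [LinearMap.mem_ker]
  rw [heq, Finset.card_sdiff_of_subset hsub, card_filter_mem, card_filter_mem, hrank,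
    finrank_span_singleton hv, pow_one]

/-- Counting `w ∈ W` with `w ∉ span {v}`, for `v ∈ W`, `v ≠ 0`. -/
lemma card_in_W (W : Submodule (ZMod l) (V l g)) {v : V l g} (hv : v ∈ W) (hv0 : v ≠ 0) :
    (Finset.univ.filter (fun w => w ∈ W ∧ w ∉ Submodule.span (ZMod l) {v})).card
      = l ^ (Module.finrank (ZMod l) W) - l := by
  have hspan : Submodule.span (ZMod l) {v} ≤ W := by
    rw [Submodule.span_le, Set.singleton_subset_iff]; exact hv
  have hsub : (Finset.univ.filter (· ∈ Submodule.span (ZMod l) {v}))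
      ⊆ (Finset.univ.filter (· ∈ W)) := by
    intro w hw
    simp only [Finset.mem_filter] at hw ⊢
    exact ⟨hw.1, hspan hw.2⟩
  have heq : (Finset.univ.filter (fun w => w ∈ W ∧ w ∉ Submodule.span (ZMod l) {v}))
      = (Finset.univ.filter (· ∈ W)) \ (Finset.univ.filter (· ∈ Submodule.span (ZMod l) {v})) := by
    ext w; simp
  rw [heq, Finset.card_sdiff_of_subset hsub, card_filter_mem, card_filter_mem,
    finrank_span_singleton hv0, pow_one]

/-- Generic double counting of pairs. -/
lemma card_pairs {α β : Type*} [Fintype α] [Fintype β] (p : α → Prop) (q : α → β → Prop) :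
    (Finset.univ.filter (fun x : α × β => p x.1 ∧ q x.1 x.2)).card
      = ∑ a ∈ Finset.univ.filter p, (Finset.univ.filter (q a)).card := by
  rw [Finset.card_eq_sum_card_fiberwise
    (f := fun x : α × β => x.1) (t := Finset.univ.filter p)
    (fun x hx => by simp only [Finset.mem_coe, Finset.mem_filter] at hx ⊢; exact ⟨Finset.mem_univ _, hx.2.1⟩)]
  refine Finset.sum_congr rfl fun a ha => ?_
  simp only [Finset.mem_filter] at ha
  have key : (Finset.univ.filter (fun x : α × β => (p x.1 ∧ q x.1 x.2) ∧ x.1 = a))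
      = (Finset.univ.filter (q a)).map
          ⟨fun b => (a, b), fun b b' h => (Prod.mk.injEq .. ▸ h).2⟩ := by
    ext ⟨x1, x2⟩
    simp only [Finset.mem_filter, Finset.mem_univ, true_and, Finset.mem_map,
      Function.Embedding.coeFn_mk, Prod.mk.injEq]
    constructor
    · rintro ⟨⟨hp, hq⟩, rfl⟩; exact ⟨x2, hq, rfl⟩
    · rintro ⟨b, hb, rfl, rfl⟩; exact ⟨⟨ha.2, hb⟩, rfl⟩
  rw [Finset.filter_filter, key, Finset.card_map]

lemma span_pair_finrank {v w : V l g} (hv : v ≠ 0)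
    (hw : w ∉ Submodule.span (ZMod l) {v}) :
    Module.finrank (ZMod l) (Submodule.span (ZMod l) ({v, w} : Set (V l g))) = 2 := by
  have hli : LinearIndependent (ZMod l) ![v, w] := by
    rw [LinearIndependent.pair_iff' hv]
    intro a ha
    exact hw (ha ▸ Submodule.smul_mem _ a (Submodule.mem_span_singleton_self v))
  have hr : Set.range ![v, w] = {v, w} := by simp; exact Set.pair_comm w v
  have h2 := finrank_span_eq_card hli
  rw [hr] at h2
  simpa using h2

lemma span_pair_isotropic {v w : V l g} (hv : v ≠ 0)
    (hw : w ∉ Submodule.span (ZMod l) {v}) (hvw : B l g v w = 0) :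
    IsIsotropic2Plane l g (Submodule.span (ZMod l) ({v, w} : Set (V l g))) := by
  refine ⟨span_pair_finrank l g hv hw, ?_⟩
  intro x hx y hy
  obtain ⟨a, b, rfl⟩ := Submodule.mem_span_pair.mp hx
  obtain ⟨c, d, rfl⟩ := Submodule.mem_span_pair.mp hy
  have hwv : B l g w v = 0 := by rw [B_skew, hvw, neg_zero]
  rw [← B_apply]
  simp [map_add, map_smul, smul_eq_mul, hvw, hwv, B_self]

end IsoPlaneAux

open Finset Submodule Module IsoPlaneAux in
/-- The number of isotropic 2-dimensional subspaces of the standard symplectic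
space `F_l^{2g}` (`l` an odd prime, `g ≥ 1`) equals
`(l^{2g}-1)(l^{2g-2}-1)/((l^2-1)(l-1))`. -/
theorem card_isotropic_two_planes (l g : ℕ) [Fact (Nat.Prime l)] (hl : Odd l)
    (hg : 1 ≤ g) :
    Nat.card {W : Submodule (ZMod l) ((Fin g → ZMod l) × (Fin g → ZMod l)) //
        IsIsotropic2Plane l g W} * ((l ^ 2 - 1) * (l - 1)) =
      (l ^ (2 * g) - 1) * (l ^ (2 * g - 2) - 1) := by
  classical
  have hl2 : 2 ≤ l := (Fact.out : Nat.Prime l).two_le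
  letI : Fintype (Submodule (ZMod l) (V l g)) :=
    Fintype.ofInjective SetLike.coe SetLike.coe_injective
  set P : Finset (V l g × V l g) :=
    Finset.univ.filter (fun x : V l g × V l g =>
      x.1 ≠ 0 ∧ (B l g x.1 x.2 = 0 ∧ x.2 ∉ Submodule.span (ZMod l) {x.1})) with hP
  set t : Finset (Submodule (ZMod l) (V l g)) :=
    Finset.univ.filter (IsIsotropic2Plane l g) with ht
  -- global count of pairs
  have hglobal : P.card = (l ^ (2 * g) - 1) * (l ^ (2 * g - 1) - l) := by
    rw [hP]
    calc (Finset.univ.filter (fun x : V l g × V l g =>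
            x.1 ≠ 0 ∧ (B l g x.1 x.2 = 0 ∧ x.2 ∉ Submodule.span (ZMod l) {x.1}))).card
        = ∑ v ∈ Finset.univ.filter (fun v : V l g => v ≠ 0),
            (Finset.univ.filter
              (fun w => B l g v w = 0 ∧ w ∉ Submodule.span (ZMod l) {v})).card :=
          by
          have h := card_pairs (fun v : V l g => v ≠ 0)
            (fun v w => B l g v w = 0 ∧ w ∉ Submodule.span (ZMod l) {v})
          convert h using 2 <;> congr!
      _ = ∑ v ∈ Finset.univ.filter (fun v : V l g => v ≠ 0), (l ^ (2 * g - 1) - l) := by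
          refine Finset.sum_congr rfl fun v hv => ?_
          simp only [Finset.mem_filter] at hv
          exact card_perp l g hg hv.2
      _ = (l ^ (2 * g) - 1) * (l ^ (2 * g - 1) - l) := by
          rw [Finset.sum_const, smul_eq_mul, Finset.filter_ne' Finset.univ 0,
            Finset.card_erase_of_mem (Finset.mem_univ 0), Finset.card_univ, card_V]
  -- fiberwise count over isotropic planes
  have hfiber : P.card = t.card * ((l ^ 2 - 1) * (l ^ 2 - l)) := by
    rw [hP]
    rw [Finset.card_eq_sum_card_fiberwise
      (f := fun x : V l g × V l g => Submodule.span (ZMod l) ({x.1, x.2} : Set (V l g)))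
      (t := t)
      (fun x hx => by
        simp only [Finset.mem_coe, Finset.mem_filter] at hx
        rw [Finset.mem_coe, ht, Finset.mem_filter]
        exact ⟨Finset.mem_univ _, span_pair_isotropic l g hx.2.1 hx.2.2.2 hx.2.2.1⟩)]
    rw [Finset.sum_congr rfl (fun W hW => ?_), Finset.sum_const, smul_eq_mul]
    rw [ht, Finset.mem_filter] at hW
    obtain ⟨-, hW2, hWiso⟩ := hW
    -- the fiber over W
    have hfib_eq : (Finset.univ.filter (fun x : V l g × V l g =>
          x.1 ≠ 0 ∧ (B l g x.1 x.2 = 0 ∧ x.2 ∉ Submodule.span (ZMod l) {x.1}))).filter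
            (fun x => Submodule.span (ZMod l) ({x.1, x.2} : Set (V l g)) = W)
        = Finset.univ.filter (fun x : V l g × V l g =>
            (x.1 ∈ W ∧ x.1 ≠ 0) ∧ (x.2 ∈ W ∧ x.2 ∉ Submodule.span (ZMod l) {x.1})) := by
      ext x
      simp only [Finset.mem_filter, Finset.mem_univ, true_and]
      constructor
      · rintro ⟨⟨h1, h2, h3⟩, hsp⟩
        refine ⟨⟨?_, h1⟩, ?_, h3⟩
        · rw [← hsp]; exact Submodule.subset_span (Set.mem_insert _ _)
        · rw [← hsp]; exact Submodule.subset_span (Set.mem_insert_of_mem _ rfl)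
      · rintro ⟨⟨h1W, h1⟩, h2W, h2⟩
        have hB : B l g x.1 x.2 = 0 := by
          rw [B_apply]; exact hWiso x.1 h1W x.2 h2W
        refine ⟨⟨h1, hB, h2⟩, ?_⟩
        refine Submodule.eq_of_le_of_finrank_eq ?_ ?_
        · rw [Submodule.span_le, Set.insert_subset_iff, Set.singleton_subset_iff]
          exact ⟨h1W, h2W⟩
        · rw [span_pair_finrank l g h1 h2, hW2]
    rw [hfib_eq]
    calc (Finset.univ.filter (fun x : V l g × V l g =>
            (x.1 ∈ W ∧ x.1 ≠ 0) ∧ (x.2 ∈ W ∧ x.2 ∉ Submodule.span (ZMod l) {x.1}))).card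
        = ∑ v ∈ Finset.univ.filter (fun v : V l g => v ∈ W ∧ v ≠ 0),
            (Finset.univ.filter
              (fun w => w ∈ W ∧ w ∉ Submodule.span (ZMod l) {v})).card :=
          by
          have h := card_pairs (fun v : V l g => v ∈ W ∧ v ≠ 0)
            (fun v w => w ∈ W ∧ w ∉ Submodule.span (ZMod l) {v})
          convert h using 2 <;> congr!
      _ = ∑ v ∈ Finset.univ.filter (fun v : V l g => v ∈ W ∧ v ≠ 0), (l ^ 2 - l) := by
          refine Finset.sum_congr rfl fun v hv => ?_
          simp only [Finset.mem_filter] at hv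
          rw [card_in_W l g W hv.2.1 hv.2.2, hW2]
      _ = (l ^ 2 - 1) * (l ^ 2 - l) := by
          rw [Finset.sum_const, smul_eq_mul]
          congr 1
          have : (Finset.univ.filter (fun v : V l g => v ∈ W ∧ v ≠ 0))
              = (Finset.univ.filter (· ∈ W)).erase 0 := by
            ext v
            simp only [Finset.mem_filter, Finset.mem_univ, true_and, Finset.mem_erase]
            tauto
          rw [this, Finset.card_erase_of_mem (by simp [W.zero_mem]), card_filter_mem, hW2]
  -- combine
  have key : t.card * ((l ^ 2 - 1) * (l ^ 2 - l))
      = (l ^ (2 * g) - 1) * (l ^ (2 * g - 1) - l) := by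
    rw [← hfiber, hglobal]
  have hN : Nat.card {W : Submodule (ZMod l) ((Fin g → ZMod l) × (Fin g → ZMod l)) //
      IsIsotropic2Plane l g W} = t.card := by
    rw [Nat.card_eq_fintype_card, Fintype.card_subtype, ht]
  rw [hN]
  have hl0 : 0 < l := by omega
  apply Nat.eq_of_mul_eq_mul_right hl0
  have e1 : l ^ 2 - l = (l - 1) * l := by
    rw [Nat.sub_mul, one_mul, ← pow_two]
  have e2 : l ^ (2 * g - 1) - l = (l ^ (2 * g - 2) - 1) * l := by
    rw [Nat.sub_mul, one_mul, ← pow_succ]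
    congr 2
    omega
  calc t.card * ((l ^ 2 - 1) * (l - 1)) * l
      = t.card * ((l ^ 2 - 1) * ((l - 1) * l)) := by ring
    _ = t.card * ((l ^ 2 - 1) * (l ^ 2 - l)) := by rw [e1]
    _ = (l ^ (2 * g) - 1) * (l ^ (2 * g - 1) - l) := key
    _ = (l ^ (2 * g) - 1) * ((l ^ (2 * g - 2) - 1) * l) := by rw [e2]
    _ = (l ^ (2 * g) - 1) * (l ^ (2 * g - 2) - 1) * l := by ring
end

section
/- Let l be a prime, g ≥ 2, p ≥ 2 with l ≥ g(p-1)+1, and let Σ ⊂ F_l^{2g} satisfy |Σ| ≤ l^{2g-2}g(p-1). Then there exist α, β ∈ F_l^{2g} such that: α ≠ 0; β lies in the symplectic orthogonal of α but not in the line spanned by α; no nonzero multiple of α lies in Σ; and none of the points β + iα for i = 0,…,l-1 lies in Σ. -/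
open Finset Submodule

abbrev Vt (l g : ℕ) := (Fin g → ZMod l) × (Fin g → ZMod l)

variable {l g : ℕ}

lemma sympl_self (x : Vt l g) : stdSymplForm l g x x = 0 := sub_self _

lemma sympl_comm (x y : Vt l g) : stdSymplForm l g x y = - stdSymplForm l g y x := by
  simp [stdSymplForm]

lemma sympl_add_left (x y z : Vt l g) :
    stdSymplForm l g (x + y) z = stdSymplForm l g x z + stdSymplForm l g y z := by
  simp [stdSymplForm, add_mul, mul_add, Finset.sum_add_distrib]; ring

lemma sympl_smul_left (c : ZMod l) (x z : Vt l g) :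
    stdSymplForm l g (c • x) z = c * stdSymplForm l g x z := by
  simp [stdSymplForm, Finset.mul_sum, mul_sub, mul_assoc, mul_left_comm]

lemma sympl_add_right (x y z : Vt l g) :
    stdSymplForm l g x (y + z) = stdSymplForm l g x y + stdSymplForm l g x z := by
  simp [stdSymplForm, add_mul, mul_add, Finset.sum_add_distrib]; ring

lemma sympl_smul_right (c : ZMod l) (x z : Vt l g) :
    stdSymplForm l g x (c • z) = c * stdSymplForm l g x z := by
  simp [stdSymplForm, Finset.mul_sum, mul_sub, mul_assoc, mul_left_comm]

lemma sympl_sub_right (x y z : Vt l g) :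
    stdSymplForm l g x (y - z) = stdSymplForm l g x y - stdSymplForm l g x z := by
  simp [stdSymplForm, sub_mul, mul_sub, Finset.sum_sub_distrib]; ring

def symplMap (l g : ℕ) (s : Vt l g) : Vt l g →ₗ[ZMod l] ZMod l where
  toFun w := stdSymplForm l g w s
  map_add' x y := sympl_add_left x y s
  map_smul' c x := sympl_smul_left c x s

lemma sympl_exists_ne {s : Vt l g} (hs : s ≠ 0) : ∃ w, stdSymplForm l g w s ≠ 0 := by
  by_cases h1 : s.1 = 0
  · have h2 : s.2 ≠ 0 := by
      intro h2; exact hs (Prod.ext h1 h2)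
    obtain ⟨i, hi⟩ := Function.ne_iff.1 h2
    refine ⟨(Pi.single i 1, 0), ?_⟩
    simp [stdSymplForm, Pi.single_apply, Finset.sum_ite_eq]
    simpa using hi
  · obtain ⟨i, hi⟩ := Function.ne_iff.1 h1
    refine ⟨(0, Pi.single i 1), ?_⟩
    simp [stdSymplForm, Pi.single_apply, Finset.sum_ite_eq]
    simpa using hi

lemma card_Vt [Fact (Nat.Prime l)] : Fintype.card (Vt l g) = l ^ (2*g) := by
  simp [Fintype.card_pi, ZMod.card, ← pow_add, two_mul]

lemma card_orth [Fact (Nat.Prime l)] {s : Vt l g} (hs : s ≠ 0)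
    [DecidablePred (fun w : Vt l g => stdSymplForm l g w s = 0)] :
    (univ.filter (fun w : Vt l g => stdSymplForm l g w s = 0)).card = l ^ (2*g - 1) := by
  classical
  obtain ⟨w, hw⟩ := sympl_exists_ne hs
  have hsurj : LinearMap.range (symplMap l g s) = ⊤ := by
    rcases Ideal.eq_bot_or_top (LinearMap.range (symplMap l g s)) with h | h
    · exfalso; apply hw
      have : symplMap l g s w ∈ LinearMap.range (symplMap l g s) := ⟨w, rfl⟩
      rw [h] at this; exact Ideal.mem_bot.1 this
    · exact h
  have hrank : Module.finrank (ZMod l) (LinearMap.ker (symplMap l g s)) = 2*g - 1 := by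
    have h1 := LinearMap.finrank_range_add_finrank_ker (symplMap l g s)
    rw [hsurj] at h1
    simp only [finrank_top, Module.finrank_self] at h1
    have h2 : Module.finrank (ZMod l) (Vt l g) = 2*g := by
      simp [Module.finrank_prod, two_mul]
    omega
  have hcard : Fintype.card (LinearMap.ker (symplMap l g s)) = l ^ (2*g-1) := by
    rw [Module.card_eq_pow_finrank (K := ZMod l), hrank, ZMod.card]
  rw [← hcard, ← Fintype.card_subtype]
  exact Fintype.card_congr (Equiv.subtypeEquivRight (fun x => by
    simp [LinearMap.mem_ker, symplMap]))

lemma card_span_singleton [Fact (Nat.Prime l)] {s : Vt l g} (hs : s ≠ 0)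
    [DecidablePred (fun w : Vt l g => w ∈ span (ZMod l) ({s} : Set (Vt l g)))] :
    (univ.filter (fun w : Vt l g => w ∈ span (ZMod l) ({s} : Set (Vt l g)))).card = l := by
  rw [← Fintype.card_subtype]
  have : Fintype.card {x : Vt l g // x ∈ span (ZMod l) ({s} : Set (Vt l g))}
      = Fintype.card (span (ZMod l) ({s} : Set (Vt l g))) := rfl
  rw [this, Module.card_eq_pow_finrank (K := ZMod l), finrank_span_singleton hs, ZMod.card, pow_one]

/-- points of the hyperplane `s^⊥` off the line spanned by `s` -/
lemma card_K [Fact (Nat.Prime l)] {s : Vt l g} (hs : s ≠ 0)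
    [DecidablePred (fun w : Vt l g =>
      stdSymplForm l g w s = 0 ∧ w ∉ span (ZMod l) ({s} : Set (Vt l g)))] :
    (univ.filter (fun w : Vt l g =>
      stdSymplForm l g w s = 0 ∧ w ∉ span (ZMod l) ({s} : Set (Vt l g)))).card
      = l ^ (2*g - 1) - l := by
  classical
  have hsub : (univ.filter (fun w : Vt l g => w ∈ span (ZMod l) ({s} : Set (Vt l g))))
      ⊆ (univ.filter (fun w : Vt l g => stdSymplForm l g w s = 0)) := by
    intro w hw
    simp only [mem_filter, mem_univ, true_and] at hw ⊢
    obtain ⟨c, rfl⟩ := mem_span_singleton.1 hw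
    simp [sympl_smul_left, sympl_self]
  have hsd : (univ.filter (fun w : Vt l g =>
      stdSymplForm l g w s = 0 ∧ w ∉ span (ZMod l) ({s} : Set (Vt l g))))
      = (univ.filter (fun w : Vt l g => stdSymplForm l g w s = 0)) \
        (univ.filter (fun w : Vt l g => w ∈ span (ZMod l) ({s} : Set (Vt l g)))) := by
    ext w
    simp only [mem_filter, mem_sdiff, mem_univ, true_and]
  rw [show (univ.filter (fun w : Vt l g =>
      stdSymplForm l g w s = 0 ∧ w ∉ span (ZMod l) ({s} : Set (Vt l g)))).card =
      ((univ.filter (fun w : Vt l g => stdSymplForm l g w s = 0)) \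
        (univ.filter (fun w : Vt l g => w ∈ span (ZMod l) ({s} : Set (Vt l g))))).card from by
    rw [← hsd]]
  rw [card_sdiff_of_subset hsub, card_orth hs, card_span_singleton hs]

lemma indep_pair {u v : Vt l g} [Fact (Nat.Prime l)] (hu : u ≠ 0)
    (hv : v ∉ span (ZMod l) ({u} : Set (Vt l g))) {a b : ZMod l}
    (h : a • u + b • v = 0) : a = 0 ∧ b = 0 := by
  by_cases hb : b = 0
  · subst hb
    rw [zero_smul, add_zero] at h
    rcases smul_eq_zero.1 h with h' | h'
    · exact ⟨h', rfl⟩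
    · exact absurd h' hu
  · exfalso
    apply hv
    rw [mem_span_singleton]
    refine ⟨-(b⁻¹ * a), ?_⟩
    have h' : b • v = -(a • u) := eq_neg_of_add_eq_zero_right h
    have hv2 : v = (-(b⁻¹ * a)) • u := by
      calc v = b⁻¹ • (b • v) := by rw [smul_smul, inv_mul_cancel₀ hb, one_smul]
        _ = b⁻¹ • -(a • u) := by rw [h']
        _ = (-(b⁻¹ * a)) • u := by rw [smul_neg, smul_smul, neg_smul]
    exact hv2.symm

section
variable [F : Fact (Nat.Prime l)]

lemma card_G [DecidablePred (fun q : Vt l g × Vt l g =>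
      q.1 ≠ 0 ∧ stdSymplForm l g q.1 q.2 = 0 ∧
        q.2 ∉ span (ZMod l) ({q.1} : Set (Vt l g)))] :
    (univ.filter (fun q : Vt l g × Vt l g =>
      q.1 ≠ 0 ∧ stdSymplForm l g q.1 q.2 = 0 ∧
        q.2 ∉ span (ZMod l) ({q.1} : Set (Vt l g)))).card
      = (l ^ (2*g) - 1) * (l ^ (2*g - 1) - l) := by
  classical
  have key : ∀ u : Vt l g, u ≠ 0 →
      (univ.filter (fun v : Vt l g => stdSymplForm l g u v = 0 ∧
        v ∉ span (ZMod l) ({u} : Set (Vt l g)))).card = l ^ (2*g-1) - l := by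
    intro u hu
    rw [show (univ.filter (fun v : Vt l g => stdSymplForm l g u v = 0 ∧
        v ∉ span (ZMod l) ({u} : Set (Vt l g))))
      = (univ.filter (fun v : Vt l g => stdSymplForm l g v u = 0 ∧
        v ∉ span (ZMod l) ({u} : Set (Vt l g)))) from by
      apply Finset.filter_congr
      intro v _
      rw [sympl_comm u v, neg_eq_zero]]
    exact card_K hu
  rw [show (univ.filter (fun q : Vt l g × Vt l g =>
      q.1 ≠ 0 ∧ stdSymplForm l g q.1 q.2 = 0 ∧
        q.2 ∉ span (ZMod l) ({q.1} : Set (Vt l g))))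
    = (univ.filter (fun u : Vt l g => u ≠ 0)).biUnion (fun u =>
        (univ.filter (fun v : Vt l g => stdSymplForm l g u v = 0 ∧
          v ∉ span (ZMod l) ({u} : Set (Vt l g)))).image (fun v => (u, v))) from by
    ext q
    simp only [mem_biUnion, mem_filter, mem_univ, true_and, mem_image]
    constructor
    · rintro ⟨h1, h2, h3⟩
      exact ⟨q.1, h1, q.2, ⟨h2, h3⟩, rfl⟩
    · rintro ⟨u, hu, v, ⟨h2, h3⟩, rfl⟩
      exact ⟨hu, h2, h3⟩]
  rw [card_biUnion]
  · rw [Finset.sum_congr rfl (fun u hu => by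
      rw [card_image_of_injective _ (fun a b h => congrArg Prod.snd h),
        key u (by simpa using hu)])]
    rw [Finset.sum_const, smul_eq_mul, Finset.filter_ne', Finset.card_erase_of_mem (mem_univ _),
      card_univ, card_Vt]
  · intro x hx y hy hxy
    rw [Function.onFun, Finset.disjoint_left]
    rintro q hqx hqy
    simp only [mem_image, mem_filter, mem_univ, true_and] at hqx hqy
    obtain ⟨v, _, rfl⟩ := hqx
    obtain ⟨v', _, h⟩ := hqy
    exact hxy (congrArg Prod.fst h).symm


lemma card_I {s : Vt l g} (hs : s ≠ 0)
    [DecidablePred (fun q : Vt l g × Vt l g =>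
      (q.1 ≠ 0 ∧ stdSymplForm l g q.1 q.2 = 0 ∧
        q.2 ∉ span (ZMod l) ({q.1} : Set (Vt l g))) ∧
      s ∈ span (ZMod l) ({q.1, q.2} : Set (Vt l g)))] :
    (univ.filter (fun q : Vt l g × Vt l g =>
      (q.1 ≠ 0 ∧ stdSymplForm l g q.1 q.2 = 0 ∧
        q.2 ∉ span (ZMod l) ({q.1} : Set (Vt l g))) ∧
      s ∈ span (ZMod l) ({q.1, q.2} : Set (Vt l g)))).card
      = (l ^ 2 - 1) * (l ^ (2*g - 1) - l) := by
  classical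
  set F0 : ZMod l × ZMod l → Finset (Vt l g × Vt l g) := fun ab =>
    univ.filter (fun q => (q.1 ≠ 0 ∧ stdSymplForm l g q.1 q.2 = 0 ∧
      q.2 ∉ span (ZMod l) ({q.1} : Set (Vt l g))) ∧ s = ab.1 • q.1 + ab.2 • q.2) with hF0
  have hcover : (univ.filter (fun q : Vt l g × Vt l g =>
      (q.1 ≠ 0 ∧ stdSymplForm l g q.1 q.2 = 0 ∧
        q.2 ∉ span (ZMod l) ({q.1} : Set (Vt l g))) ∧
      s ∈ span (ZMod l) ({q.1, q.2} : Set (Vt l g))))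
      = (univ.filter (fun ab : ZMod l × ZMod l => ab ≠ 0)).biUnion F0 := by
    ext q
    simp only [hF0, mem_biUnion, mem_filter, mem_univ, true_and]
    constructor
    · rintro ⟨hq, hsp⟩
      obtain ⟨a, b, hab⟩ := mem_span_pair.1 hsp
      refine ⟨(a, b), ?_, hq, hab.symm⟩
      intro h0
      apply hs
      have ha : a = 0 := congrArg Prod.fst h0
      have hb : b = 0 := congrArg Prod.snd h0
      rw [← hab, ha, hb, zero_smul, zero_smul, add_zero]
    · rintro ⟨ab, hab0, hq, habs⟩
      exact ⟨hq, mem_span_pair.2 ⟨ab.1, ab.2, habs.symm⟩⟩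
  rw [hcover, card_biUnion]
  · have hconst : ∀ ab ∈ (univ.filter (fun ab : ZMod l × ZMod l => ab ≠ 0)),
        (F0 ab).card = l ^ (2*g - 1) - l := by
      rintro ⟨a, b⟩ hab
      have hab0 : (a, b) ≠ (0 : ZMod l × ZMod l) := by simpa using hab
      by_cases hb : b = 0
      · -- case b = 0, a ≠ 0 : map q ↦ q.2
        subst hb
        have ha : a ≠ 0 := by
          intro h; exact hab0 (by simp [h])
        rw [← card_K hs]
        apply Finset.card_bij' (fun q _ => q.2) (fun w _ => ((a⁻¹ • s, w) : Vt l g × Vt l g))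
        · rintro ⟨u, v⟩ hq
          simp only [hF0, mem_filter, mem_univ, true_and] at hq ⊢
          obtain ⟨⟨hu, hw, hv⟩, hsuv⟩ := hq
          rw [zero_smul, add_zero] at hsuv
          constructor
          · rw [hsuv, sympl_smul_right, sympl_comm v u, hw, neg_zero, mul_zero]
          · intro hmem
            apply hv
            obtain ⟨c, hc⟩ := mem_span_singleton.1 hmem
            rw [mem_span_singleton]
            exact ⟨c * a, by rw [← hc, hsuv, smul_smul]⟩
        · rintro w hw
          simp only [mem_filter, mem_univ, true_and] at hw
          obtain ⟨hw1, hw2⟩ := hw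
          simp only [hF0, mem_filter, mem_univ, true_and]
          refine ⟨⟨?_, ?_, ?_⟩, ?_⟩
          · exact smul_ne_zero (inv_ne_zero ha) hs
          · rw [sympl_smul_left, sympl_comm s w, hw1, neg_zero, mul_zero]
          · intro hmem
            apply hw2
            obtain ⟨c, hc⟩ := mem_span_singleton.1 hmem
            exact mem_span_singleton.2 ⟨c * a⁻¹, by rw [← hc, smul_smul]⟩
          · rw [smul_smul, mul_inv_cancel₀ ha, one_smul, zero_smul, add_zero]
        · rintro ⟨u, v⟩ hq
          simp only [hF0, mem_filter, mem_univ, true_and] at hq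
          obtain ⟨⟨hu, hw, hv⟩, hsuv⟩ := hq
          rw [zero_smul, add_zero] at hsuv
          have : a⁻¹ • s = u := by rw [hsuv, smul_smul, inv_mul_cancel₀ ha, one_smul]
          exact Prod.ext this rfl
        · intro w hw; rfl
      · -- case b ≠ 0 : map q ↦ q.1
        rw [← card_K hs]
        apply Finset.card_bij' (fun q _ => q.1)
          (fun w _ => ((w, b⁻¹ • (s - a • w)) : Vt l g × Vt l g))
        · rintro ⟨u, v⟩ hq
          simp only [hF0, mem_filter, mem_univ, true_and] at hq ⊢
          obtain ⟨⟨hu, hw, hv⟩, hsuv⟩ := hq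
          constructor
          · rw [hsuv, sympl_add_right, sympl_smul_right, sympl_smul_right, sympl_self,
              hw, mul_zero, mul_zero, add_zero]
          · intro hmem
            obtain ⟨c, hc⟩ := mem_span_singleton.1 hmem
            have hc0 : c ≠ 0 := by rintro rfl; rw [zero_smul] at hc; exact hu hc.symm
            apply hv
            refine mem_span_singleton.2 ⟨b⁻¹ * (c⁻¹ - a), ?_⟩
            have hsc : s = c⁻¹ • u := by rw [← hc, smul_smul, inv_mul_cancel₀ hc0, one_smul]
            have hbv : b • v = (c⁻¹ - a) • u := by
              rw [sub_smul]
              rw [hsc] at hsuv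
              linear_combination (norm := module) hsuv.symm
            calc (b⁻¹ * (c⁻¹ - a)) • u = b⁻¹ • ((c⁻¹ - a) • u) := by rw [smul_smul]
              _ = b⁻¹ • (b • v) := by rw [hbv]
              _ = v := by rw [smul_smul, inv_mul_cancel₀ hb, one_smul]
        · rintro w hw
          simp only [mem_filter, mem_univ, true_and] at hw
          obtain ⟨hw1, hw2⟩ := hw
          simp only [hF0, mem_filter, mem_univ, true_and]
          have hwne : w ≠ 0 := by rintro rfl; exact hw2 (zero_mem _)
          refine ⟨⟨hwne, ?_, ?_⟩, ?_⟩
          · rw [sympl_smul_right, sympl_sub_right, sympl_smul_right, sympl_self,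
              hw1, mul_zero, sub_zero, mul_zero]
          · intro hmem
            obtain ⟨c, hc⟩ := mem_span_singleton.1 hmem
            apply hw2
            have h2 : b • (c • w) = s - a • w := by
              rw [hc, smul_smul, mul_inv_cancel₀ hb, one_smul]
            have hsw : s = (a + b*c) • w := by
              rw [add_smul]
              linear_combination (norm := module) h2.symm
            have habc : a + b*c ≠ 0 := by
              intro h; rw [h, zero_smul] at hsw; exact hs hsw
            exact mem_span_singleton.2
              ⟨(a+b*c)⁻¹, by rw [hsw, smul_smul, inv_mul_cancel₀ habc, one_smul]⟩
          · rw [smul_smul, mul_inv_cancel₀ hb, one_smul]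
            module
        · rintro ⟨u, v⟩ hq
          simp only [hF0, mem_filter, mem_univ, true_and] at hq
          obtain ⟨⟨hu, hw, hv⟩, hsuv⟩ := hq
          have hveq : b⁻¹ • (s - a • u) = v := by
            rw [hsuv]
            calc b⁻¹ • (a • u + b • v - a • u) = b⁻¹ • (b • v) := by congr 1; module
              _ = v := by rw [smul_smul, inv_mul_cancel₀ hb, one_smul]
          exact Prod.ext rfl hveq
        · intro w hw; rfl
    rw [Finset.sum_congr rfl hconst, Finset.sum_const, smul_eq_mul,
      Finset.filter_ne', Finset.card_erase_of_mem (mem_univ _), card_univ]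
    congr 2
    simp [ZMod.card, sq]
  · intro x hx y hy hxy
    rw [Function.onFun, Finset.disjoint_left]
    rintro q hqx hqy
    simp only [hF0, mem_filter, mem_univ, true_and] at hqx hqy
    obtain ⟨⟨hu, _, hv⟩, hx1⟩ := hqx
    obtain ⟨_, hy1⟩ := hqy
    apply hxy
    have : (x.1 - y.1) • q.1 + (x.2 - y.2) • q.2 = 0 := by
      have h12 : x.1 • q.1 + x.2 • q.2 = y.1 • q.1 + y.2 • q.2 := by rw [← hx1, ← hy1]
      linear_combination (norm := module) h12
    obtain ⟨h1, h2⟩ := indep_pair hu hv this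
    have e1 : x.1 = y.1 := by linear_combination h1
    have e2 : x.2 = y.2 := by linear_combination h2
    exact Prod.ext e1 e2


end

/-- Lemma 4.3 of the paper, in additive notation. Let `l` be a prime,
`g ≥ 2`, `p ≥ 2` with `l ≥ g(p-1)+1`, and `Σ ⊂ F_l^{2g}` with
`|Σ| ≤ l^{2g-2} g (p-1)`. Then there exist `α ≠ 0` and `β` in the symplectic
orthogonal of `α` but not on the line spanned by `α`, such that no nonzero
multiple of `α` lies in `Σ` and no point `β + iα` (`i = 0,…,l-1`) lies in `Σ`. -/
theorem exists_good_pair (l g p : ℕ) [Fact (Nat.Prime l)]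
    (hg : 2 ≤ g) (hp : 2 ≤ p) (hl : g * (p - 1) + 1 ≤ l)
    (S : Finset ((Fin g → ZMod l) × (Fin g → ZMod l)))
    (hS : S.card ≤ l ^ (2 * g - 2) * g * (p - 1)) :
    ∃ α β : (Fin g → ZMod l) × (Fin g → ZMod l),
      α ≠ 0 ∧
      stdSymplForm l g α β = 0 ∧
      β ∉ Submodule.span (ZMod l) ({α} : Set _) ∧
      (∀ c : ZMod l, c ≠ 0 → c • α ∉ S) ∧
      (∀ i : ZMod l, β + i • α ∉ S) := by
  classical
  have hp1 : 1 ≤ p - 1 := by omega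
  have hl3 : 3 ≤ l := by
    have : 2 * 1 ≤ g * (p - 1) := Nat.mul_le_mul hg hp1
    omega
  have hl1 : 1 < l := by omega
  set G : Finset (Vt l g × Vt l g) := univ.filter (fun q =>
    q.1 ≠ 0 ∧ stdSymplForm l g q.1 q.2 = 0 ∧
      q.2 ∉ span (ZMod l) ({q.1} : Set (Vt l g))) with hG
  set cnt : Vt l g × Vt l g → ℕ := fun q =>
    (S.filter (fun t => t ≠ 0 ∧
      t ∈ span (ZMod l) ({q.1, q.2} : Set (Vt l g)))).card with hcnt
  -- Step C : total count
  have hsum : ∑ q ∈ G, cnt q ≤ S.card * ((l^2 - 1) * (l^(2*g-1) - l)) := by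
    have hswap : ∑ q ∈ G, cnt q = ∑ t ∈ S, (G.filter (fun q => t ≠ 0 ∧
        t ∈ span (ZMod l) ({q.1, q.2} : Set (Vt l g)))).card := by
      simp only [hcnt, Finset.card_filter]
      exact Finset.sum_comm
    rw [hswap]
    have hone : ∀ t ∈ S, (G.filter (fun q => t ≠ 0 ∧
        t ∈ span (ZMod l) ({q.1, q.2} : Set (Vt l g)))).card
        ≤ (l^2 - 1) * (l^(2*g-1) - l) := by
      intro t _
      by_cases ht0 : t = 0
      · rw [Finset.filter_false_of_mem]
        · exact Nat.zero_le _
        · intro q _; simp [ht0]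
      · have he : G.filter (fun q => t ≠ 0 ∧
            t ∈ span (ZMod l) ({q.1, q.2} : Set (Vt l g)))
            = univ.filter (fun q : Vt l g × Vt l g =>
              (q.1 ≠ 0 ∧ stdSymplForm l g q.1 q.2 = 0 ∧
                q.2 ∉ span (ZMod l) ({q.1} : Set (Vt l g))) ∧
              t ∈ span (ZMod l) ({q.1, q.2} : Set (Vt l g))) := by
          rw [hG, Finset.filter_filter]
          apply Finset.filter_congr
          intro q _
          simp [ht0]
        rw [he, card_I ht0]
    calc ∑ t ∈ S, (G.filter (fun q => t ≠ 0 ∧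
          t ∈ span (ZMod l) ({q.1, q.2} : Set (Vt l g)))).card
        ≤ ∑ _t ∈ S, (l^2 - 1) * (l^(2*g-1) - l) := Finset.sum_le_sum hone
      _ = S.card * ((l^2 - 1) * (l^(2*g-1) - l)) := by
          rw [Finset.sum_const, smul_eq_mul]
  have hGcard : G.card = (l^(2*g) - 1) * (l^(2*g-1) - l) := by
    rw [hG]; exact card_G
  -- Step D : find a good plane
  obtain ⟨q, hqG, hqcnt⟩ : ∃ q ∈ G, cnt q < l - 1 := by
    by_contra hcon
    push_neg at hcon
    have hlow : G.card * (l-1) ≤ ∑ q ∈ G, cnt q := by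
      have := Finset.card_nsmul_le_sum G cnt (l-1) (fun q hq => hcon q hq)
      simpa [smul_eq_mul] using this
    have hc0 : 0 < l^(2*g-1) - l := by
      have h1 : l^1 < l^(2*g-1) := Nat.pow_lt_pow_right hl1 (by omega)
      rw [pow_one] at h1
      omega
    have hSle : S.card ≤ l^(2*g-2) * (l - 1) := by
      calc S.card ≤ l ^ (2*g-2) * g * (p-1) := hS
        _ = l^(2*g-2) * (g * (p-1)) := by ring
        _ ≤ l^(2*g-2) * (l-1) := Nat.mul_le_mul_left _ (by omega)
    have hmm : l^(2*g-2) * (l^2 - 1) + l^(2*g-2) = l^(2*g) := by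
      have h1 : l^(2*g-2) * l^2 = l^(2*g) := by rw [← pow_add]; congr 1; omega
      have h2 : 1 ≤ l^2 := Nat.one_le_pow _ _ (by omega)
      calc l^(2*g-2) * (l^2 - 1) + l^(2*g-2) = l^(2*g-2) * ((l^2 - 1) + 1) := by ring
        _ = l^(2*g-2) * l^2 := by rw [Nat.sub_add_cancel h2]
        _ = l^(2*g) := h1
    have hm2 : 2 ≤ l^(2*g-2) := by
      calc 2 ≤ l := by omega
        _ = l^1 := (pow_one l).symm
        _ ≤ l^(2*g-2) := Nat.pow_le_pow_right (by omega) (by omega)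
    have hstep : (l^(2*g) - 1) * ((l^(2*g-1) - l) * (l - 1))
        ≤ (l^(2*g-2) * (l^2 - 1)) * ((l^(2*g-1) - l) * (l - 1)) := by
      calc (l^(2*g)-1) * ((l^(2*g-1)-l)*(l-1)) = G.card * (l-1) := by rw [hGcard]; ring
        _ ≤ ∑ q ∈ G, cnt q := hlow
        _ ≤ S.card * ((l^2-1)*(l^(2*g-1)-l)) := hsum
        _ ≤ (l^(2*g-2)*(l-1)) * ((l^2-1)*(l^(2*g-1)-l)) :=
            Nat.mul_le_mul_right _ hSle
        _ = (l^(2*g-2)*(l^2-1)) * ((l^(2*g-1)-l)*(l-1)) := by ring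
    have hpos : 0 < (l^(2*g-1)-l)*(l-1) := Nat.mul_pos hc0 (by omega)
    have hkey : l^(2*g)-1 ≤ l^(2*g-2)*(l^2-1) := Nat.le_of_mul_le_mul_right hstep hpos
    omega
  -- Step E : construction inside the isotropic plane
  simp only [hG, mem_filter, mem_univ, true_and] at hqG
  obtain ⟨hu, hww, hv⟩ := hqG
  set T : Finset (Vt l g) := S.filter (fun t => t ≠ 0 ∧
    t ∈ span (ZMod l) ({q.1, q.2} : Set (Vt l g))) with hTdef
  have hTcard : T.card < l - 1 := hqcnt
  have hmem1 : q.1 ∈ span (ZMod l) ({q.1, q.2} : Set (Vt l g)) :=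
    subset_span (by simp)
  have hmem2 : q.2 ∈ span (ZMod l) ({q.1, q.2} : Set (Vt l g)) :=
    subset_span (by simp)
  have hindep : ∀ a b : ZMod l, a • q.1 + b • q.2 = 0 → a = 0 ∧ b = 0 :=
    fun a b h => indep_pair hu hv h
  -- the l+1 candidate directions
  set f : Option (ZMod l) → Vt l g :=
    fun o => match o with | none => q.2 | some c => q.1 + c • q.2 with hf
  have hfP : ∀ o, f o ∈ span (ZMod l) ({q.1, q.2} : Set (Vt l g)) := by
    intro o; cases o with
    | none => exact hmem2
    | some c => exact add_mem hmem1 (smul_mem _ _ hmem2)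
  have hfne : ∀ o, f o ≠ 0 := by
    intro o; cases o with
    | none =>
        intro h
        have h' : q.2 = 0 := h
        exact hv (by rw [h']; exact zero_mem _)
    | some c =>
        intro h
        have h' : (1 : ZMod l) • q.1 + c • q.2 = 0 := by rw [one_smul]; exact h
        exact one_ne_zero (hindep 1 c h').1
  have huniq : ∀ t : Vt l g, t ≠ 0 → ∀ o o' : Option (ZMod l),
      t ∈ span (ZMod l) ({f o} : Set (Vt l g)) →
      t ∈ span (ZMod l) ({f o'} : Set (Vt l g)) → o = o' := by
    intro t ht o o' h1 h2
    obtain ⟨c1, hc1⟩ := mem_span_singleton.1 h1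
    obtain ⟨c2, hc2⟩ := mem_span_singleton.1 h2
    have hc10 : c1 ≠ 0 := by rintro rfl; rw [zero_smul] at hc1; exact ht hc1.symm
    have hc20 : c2 ≠ 0 := by rintro rfl; rw [zero_smul] at hc2; exact ht hc2.symm
    have he : c1 • f o = c2 • f o' := by rw [hc1, hc2]
    cases o with
    | none => cases o' with
      | none => rfl
      | some c' =>
          exfalso
          have h0 : (-c2) • q.1 + (c1 - c2 * c') • q.2 = 0 := by
            simp only [hf] at he
            linear_combination (norm := module) he
          exact hc20 (by have := (hindep _ _ h0).1; linear_combination -this)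
    | some c => cases o' with
      | none =>
          exfalso
          have h0 : c1 • q.1 + (c1 * c - c2) • q.2 = 0 := by
            simp only [hf] at he
            linear_combination (norm := module) he
          exact hc10 (hindep _ _ h0).1
      | some c' =>
          have h0 : (c1 - c2) • q.1 + (c1 * c - c2 * c') • q.2 = 0 := by
            simp only [hf] at he
            linear_combination (norm := module) he
          obtain ⟨e1, e2⟩ := hindep _ _ h0
          have e1' : c1 = c2 := by linear_combination e1
          congr 1
          have : c1 * c = c1 * c' := by rw [e1'] at e2 ⊢; linear_combination e2
          exact mul_left_cancel₀ hc10 this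
  -- choose a direction avoiding T
  set B : Finset (Option (ZMod l)) := univ.filter (fun o =>
    ∃ t ∈ T, t ∈ span (ZMod l) ({f o} : Set (Vt l g))) with hB
  have hBcard : B.card ≤ T.card := by
    set wit : Option (ZMod l) → Vt l g := fun o =>
      if h : ∃ t ∈ T, t ∈ span (ZMod l) ({f o} : Set (Vt l g)) then h.choose else 0
      with hwitdef
    have hwit : ∀ o ∈ B, wit o ∈ T ∧ wit o ∈ span (ZMod l) ({f o} : Set (Vt l g)) := by
      intro o ho
      simp only [hB, mem_filter, mem_univ, true_and] at ho
      simp only [hwitdef, dif_pos ho]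
      exact ⟨ho.choose_spec.1, ho.choose_spec.2⟩
    apply Finset.card_le_card_of_injOn wit (fun o ho => (hwit o ho).1)
    intro o1 h1 o2 h2 heq
    have ht1 : wit o1 ∈ T := (hwit o1 h1).1
    have htne : wit o1 ≠ 0 := by
      rw [hTdef] at ht1; exact (mem_filter.1 ht1).2.1
    exact huniq (wit o1) htne o1 o2 (hwit o1 h1).2 (heq ▸ (hwit o2 h2).2)
  obtain ⟨o, ho⟩ : ∃ o, o ∉ B := by
    by_contra hcon
    push_neg at hcon
    have hsub : (univ : Finset (Option (ZMod l))) ⊆ B := fun x _ => hcon x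
    have := Finset.card_le_card hsub
    rw [card_univ, Fintype.card_option, ZMod.card] at this
    omega
  set α : Vt l g := f o with hα
  have hαP : α ∈ span (ZMod l) ({q.1, q.2} : Set (Vt l g)) := hfP o
  have hα0 : α ≠ 0 := hfne o
  have hαT : ∀ t ∈ T, t ∉ span (ZMod l) ({α} : Set (Vt l g)) := by
    intro t ht hsp
    exact ho (by rw [hB]; exact mem_filter.2 ⟨mem_univ _, ⟨t, ht, hsp⟩⟩)
  -- complementary vector in the plane
  set wv : Vt l g := (match o with | none => q.1 | some _ => q.2) with hwv
  have hwP : wv ∈ span (ZMod l) ({q.1, q.2} : Set (Vt l g)) := by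
    cases o with
    | none => exact hmem1
    | some c => exact hmem2
  have hindep2 : ∀ a b : ZMod l, a • α + b • wv = 0 → a = 0 ∧ b = 0 := by
    intro a b h
    cases o with
    | none =>
        have h0 : b • q.1 + a • q.2 = 0 := by
          simp only [hα, hwv, hf] at h
          linear_combination (norm := module) h
        obtain ⟨e1, e2⟩ := hindep _ _ h0
        exact ⟨e2, e1⟩
    | some c =>
        have h0 : a • q.1 + (a * c + b) • q.2 = 0 := by
          simp only [hα, hwv, hf] at h
          linear_combination (norm := module) h
        obtain ⟨e1, e2⟩ := hindep _ _ h0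
        refine ⟨e1, ?_⟩
        rw [e1] at e2
        linear_combination e2
  -- choose a coset avoiding T
  set B2 : Finset (ZMod l) := (univ.filter (fun d : ZMod l => d ≠ 0)).filter
    (fun d => ∃ t ∈ T, ∃ i : ZMod l, t = d • wv + i • α) with hB2
  have hB2card : B2.card ≤ T.card := by
    set wit2 : ZMod l → Vt l g := fun d =>
      if h : ∃ t ∈ T, ∃ i : ZMod l, t = d • wv + i • α then h.choose else 0
      with hwit2def
    have hwit2 : ∀ d ∈ B2, wit2 d ∈ T ∧ ∃ i : ZMod l, wit2 d = d • wv + i • α := by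
      intro d hd
      simp only [hB2, mem_filter, mem_univ, true_and] at hd
      simp only [hwit2def, dif_pos hd.2]
      exact ⟨hd.2.choose_spec.1, hd.2.choose_spec.2⟩
    apply Finset.card_le_card_of_injOn wit2 (fun d hd => (hwit2 d hd).1)
    intro d1 h1 d2 h2 heq
    obtain ⟨i1, hi1⟩ := (hwit2 d1 h1).2
    obtain ⟨i2, hi2⟩ := (hwit2 d2 h2).2
    rw [heq] at hi1
    have h0 : (i1 - i2) • α + (d1 - d2) • wv = 0 := by
      rw [hi2] at hi1
      linear_combination (norm := module) hi1.symm
    have := (hindep2 _ _ h0).2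
    have : d1 = d2 := by linear_combination this
    exact this
  obtain ⟨d, hdmem, hdB2⟩ : ∃ d ∈ univ.filter (fun d : ZMod l => d ≠ 0), d ∉ B2 := by
    by_contra hcon
    push_neg at hcon
    have hsub : univ.filter (fun d : ZMod l => d ≠ 0) ⊆ B2 := fun x hx => hcon x hx
    have h1 := Finset.card_le_card hsub
    rw [Finset.filter_ne', Finset.card_erase_of_mem (mem_univ _), card_univ, ZMod.card] at h1
    omega
  have hd0 : d ≠ 0 := by simpa using hdmem
  set β : Vt l g := d • wv with hβ
  have hβP : β ∈ span (ZMod l) ({q.1, q.2} : Set (Vt l g)) := smul_mem _ _ hwP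
  -- the symplectic form vanishes on the plane
  have h21 : stdSymplForm l g q.2 q.1 = 0 := by rw [sympl_comm, hww, neg_zero]
  have hplane : ∀ x y : Vt l g, x ∈ span (ZMod l) ({q.1, q.2} : Set (Vt l g)) →
      y ∈ span (ZMod l) ({q.1, q.2} : Set (Vt l g)) → stdSymplForm l g x y = 0 := by
    intro x y hx hy
    obtain ⟨a, b, hab⟩ := mem_span_pair.1 hx
    obtain ⟨c, e, hce⟩ := mem_span_pair.1 hy
    rw [← hab, ← hce]
    rw [sympl_add_left, sympl_smul_left, sympl_smul_left,
      sympl_add_right, sympl_add_right, sympl_smul_right, sympl_smul_right,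
      sympl_smul_right, sympl_smul_right, sympl_self, sympl_self, hww, h21]
    ring
  refine ⟨α, β, hα0, hplane α β hαP hβP, ?_, ?_, ?_⟩
  · -- β ∉ span {α}
    intro hsp
    obtain ⟨c, hc⟩ := mem_span_singleton.1 hsp
    have h0 : c • α + (-d) • wv = 0 := by
      rw [hβ] at hc
      linear_combination (norm := module) hc
    have := (hindep2 _ _ h0).2
    exact hd0 (by linear_combination -this)
  · -- multiples of α avoid S
    intro c hc hmem
    have htT : c • α ∈ T := by
      rw [hTdef]
      exact mem_filter.2 ⟨hmem, smul_ne_zero hc hα0, smul_mem _ _ hαP⟩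
    exact hαT _ htT (mem_span_singleton.2 ⟨c, rfl⟩)
  · -- the affine line β + iα avoids S
    intro i hmem
    have hne : β + i • α ≠ 0 := by
      intro h0
      have h1 : i • α + d • wv = 0 := by
        rw [hβ] at h0
        linear_combination (norm := module) h0
      exact hd0 (hindep2 _ _ h1).2
    have htT : β + i • α ∈ T := by
      rw [hTdef]
      exact mem_filter.2 ⟨hmem, hne,
        add_mem (smul_mem _ _ hwP) (smul_mem _ _ hαP)⟩
    apply hdB2
    rw [hB2]
    exact mem_filter.2 ⟨hdmem, ⟨β + i • α, htT, i, by rw [hβ]⟩⟩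
end
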